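/- Let γ : ℝ^d → ℝ be a variogram. If γ(y) = γ(0) for some y ∈ ℝ^d, then γ(ξ + y) = γ(ξ) for all ξ ∈ ℝ^d, i.e. γ is periodic with period y. -/
import Mathlib


open scoped BigOperators

/-- A variogram on `ℝ^d`: nonnegative at the origin, even, and conditionally negative
definite (for complex weights summing to zero, the quadratic form is real and `≤ 0`). -/
def IsVariogram {d : ℕ} (γ : EuclideanSpace ℝ (Fin d) → ℝ) : Prop :=
  0 ≤ γ 0 ∧ (∀ ξ, γ (-ξ) = γ ξ) ∧
    ∀ (n : ℕ) (ξ : Fin n → EuclideanSpace ℝ (Fin d)) (a : Fin n → ℂ),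
      (∑ i, a i) = 0 →
      (∑ i, ∑ j, a i * (γ (ξ i - ξ j) : ℂ) * (starRingEnd ℂ) (a j)).im = 0 ∧
      (∑ i, ∑ j, a i * (γ (ξ i - ξ j) : ℂ) * (starRingEnd ℂ) (a j)).re ≤ 0

/-- Key inequality: applying conditional negative definiteness to the points `(0, s, y)`
with real weights `(-(1+b), 1, b)` and using `γ y = γ 0`. -/
lemma variogram_key {d : ℕ} (γ : EuclideanSpace ℝ (Fin d) → ℝ) (hγ : IsVariogram γ)
    (y : EuclideanSpace ℝ (Fin d)) (hy : γ y = γ 0)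
    (s : EuclideanSpace ℝ (Fin d)) (b : ℝ) :
    γ 0 - γ s + b * (γ (s - y) - γ s) ≤ 0 := by
  obtain ⟨_, heven, hcnd⟩ := hγ
  have h := (hcnd 3 ![0, s, y] ![((-(1+b) : ℝ) : ℂ), ((1:ℝ):ℂ), ((b:ℝ):ℂ)] (by
    simp [Fin.sum_univ_three])).2
  simp only [Fin.sum_univ_three, Matrix.cons_val_zero, Matrix.cons_val_one, Matrix.head_cons,
    Matrix.cons_val_two, Matrix.tail_cons, Complex.conj_ofReal, sub_self, zero_sub, sub_zero,
    heven] at h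
  rw [show y - s = -(s - y) by abel, heven, hy] at h
  norm_cast at h
  nlinarith [h]

/-- If γ is a variogram and γ(y) = γ(0) for some y, then γ is periodic with period y. -/
theorem stmt13 {d : ℕ} (γ : EuclideanSpace ℝ (Fin d) → ℝ) (hγ : IsVariogram γ)
    (y : EuclideanSpace ℝ (Fin d)) (hy : γ y = γ 0) :
    ∀ ξ : EuclideanSpace ℝ (Fin d), γ (ξ + y) = γ ξ := by
  intro ξ
  have hK : ∀ b : ℝ, γ 0 - γ (ξ + y) + b * (γ ξ - γ (ξ + y)) ≤ 0 := by
    intro b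
    have := variogram_key γ hγ y hy (ξ + y) b
    rwa [show ξ + y - y = ξ by abel] at this
  by_contra hne
  have hC : γ ξ - γ (ξ + y) ≠ 0 := fun h => hne (by linarith [sub_eq_zero.mp h])
  have h1 := hK ((1 - (γ 0 - γ (ξ + y))) / (γ ξ - γ (ξ + y)))
  rw [div_mul_cancel₀ _ hC] at h1
  linarith
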